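/- Let h be a symmetric n×n real matrix and let ξ ∈ ℝ^n be nonzero. Then |ξ|² · ∑_{i,k,q=1}^n (ξ_i h_{kq} − ξ_k h_{iq})² − ∑_{i,k=1}^n (ξ_i (h·ξ)_k − ξ_k (h·ξ)_i)² = 2|ξ|⁴ · tr((h·Π_ξ^⊥)²). -/
import Mathlib


open Matrix

/-- Orthogonal projection onto the orthogonal complement of `ξ`:
`Π_ξ^⊥ = I - |ξ|⁻² ξ ξᵀ`. -/
noncomputable def Pperp {n : ℕ} (ξ : Fin n → ℝ) : Matrix (Fin n) (Fin n) ℝ :=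
  1 - (∑ i, ξ i ^ 2)⁻¹ • Matrix.vecMulVec ξ ξ

theorem stmt8 {n : ℕ} (h : Matrix (Fin n) (Fin n) ℝ) (hsym : h.IsSymm)
    (ξ : Fin n → ℝ) (hξ : ξ ≠ 0) :
    (∑ i, ξ i ^ 2) * (∑ i, ∑ k, ∑ q, (ξ i * h k q - ξ k * h i q) ^ 2) -
        ∑ i, ∑ k, (ξ i * h.mulVec ξ k - ξ k * h.mulVec ξ i) ^ 2 =
      2 * (∑ i, ξ i ^ 2) ^ 2 * Matrix.trace ((h * Pperp ξ) * (h * Pperp ξ)) := by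
  set S : ℝ := ∑ i, ξ i ^ 2 with hSdef
  set b : Fin n → ℝ := h.mulVec ξ with hbdef
  have hsym' : ∀ i j, h i j = h j i := fun i j => (Matrix.IsSymm.apply hsym j i)
  have hS : S ≠ 0 := by
    have : 0 < S := by
      obtain ⟨i, hi⟩ := Function.ne_iff.mp hξ
      exact Finset.sum_pos' (fun j _ => sq_nonneg _)
        ⟨i, Finset.mem_univ i, sq_pos_of_ne_zero hi⟩
    exact this.ne'
  set A : ℝ := ∑ i, ∑ k, h i k ^ 2 with hAdef
  set B : ℝ := ∑ i, b i ^ 2 with hBdef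
  set C : ℝ := ∑ i, ξ i * b i with hCdef
  have hbcol : ∀ q, ∑ i, ξ i * h i q = b q := by
    intro q
    rw [hbdef]
    simp only [Matrix.mulVec, dotProduct]
    exact Finset.sum_congr rfl fun i _ => by rw [hsym' i q]; ring
  have hbrow : ∀ i, ∑ j, h i j * ξ j = b i := fun i => rfl
  have hBB : ∑ i, b i * b i = B := Finset.sum_congr rfl fun i _ => (sq (b i)).symm
  -- key1
  have key1 : (∑ i, ∑ k, ∑ q, (ξ i * h k q - ξ k * h i q) ^ 2) = 2 * (S * A) - 2 * B := by
    have e1 : ∀ i k q : Fin n, (ξ i * h k q - ξ k * h i q) ^ 2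
        = ξ i ^ 2 * h k q ^ 2 + ξ k ^ 2 * h i q ^ 2 - 2 * ((ξ i * h i q) * (ξ k * h k q)) :=
      fun i k q => by ring
    simp_rw [e1, Finset.sum_sub_distrib, Finset.sum_add_distrib]
    have t1 : (∑ i, ∑ k, ∑ q, ξ i ^ 2 * h k q ^ 2) = S * A := by
      rw [hSdef, hAdef, Finset.sum_mul_sum]
      simp_rw [Finset.mul_sum]
    have t2 : (∑ i, ∑ k, ∑ q, ξ k ^ 2 * h i q ^ 2) = S * A := by
      rw [show (∑ i, ∑ k, ∑ q, ξ k ^ 2 * h i q ^ 2)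
          = ∑ k, ∑ i, ∑ q, ξ k ^ 2 * h i q ^ 2 from Finset.sum_comm]
      rw [hSdef, hAdef, Finset.sum_mul_sum]
      simp_rw [Finset.mul_sum]
    have base : (∑ i, ∑ k, ∑ q, (ξ i * h i q) * (ξ k * h k q)) = B := by
      calc (∑ i, ∑ k, ∑ q, (ξ i * h i q) * (ξ k * h k q))
          = ∑ i, ∑ q, ∑ k, (ξ i * h i q) * (ξ k * h k q) :=
            Finset.sum_congr rfl fun i _ => Finset.sum_comm
        _ = ∑ q, ∑ i, ∑ k, (ξ i * h i q) * (ξ k * h k q) := Finset.sum_comm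
        _ = ∑ q, b q ^ 2 := Finset.sum_congr rfl fun q _ => by
            rw [← hbcol q, sq, Finset.sum_mul_sum]
        _ = B := rfl
    have t3 : (∑ i, ∑ k, ∑ q, 2 * ((ξ i * h i q) * (ξ k * h k q))) = 2 * B := by
      simp_rw [← Finset.mul_sum]
      rw [base]
    rw [t1, t2, t3]; ring
  -- key2
  have key2 : (∑ i, ∑ k, (ξ i * b k - ξ k * b i) ^ 2) = 2 * (S * B) - 2 * C ^ 2 := by
    have e2 : ∀ i k : Fin n, (ξ i * b k - ξ k * b i) ^ 2
        = ξ i ^ 2 * b k ^ 2 + ξ k ^ 2 * b i ^ 2 - 2 * ((ξ i * b i) * (ξ k * b k)) :=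
      fun i k => by ring
    simp_rw [e2, Finset.sum_sub_distrib, Finset.sum_add_distrib]
    have t1 : (∑ i, ∑ k, ξ i ^ 2 * b k ^ 2) = S * B := by
      rw [hSdef, hBdef, Finset.sum_mul_sum]
    have t2 : (∑ i, ∑ k, ξ k ^ 2 * b i ^ 2) = S * B := by
      rw [show (∑ i, ∑ k, ξ k ^ 2 * b i ^ 2) = ∑ k, ∑ i, ξ k ^ 2 * b i ^ 2 from
        Finset.sum_comm]
      rw [hSdef, hBdef, Finset.sum_mul_sum]
    have t3 : (∑ i, ∑ k, 2 * ((ξ i * b i) * (ξ k * b k))) = 2 * C ^ 2 := by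
      calc (∑ i, ∑ k, 2 * ((ξ i * b i) * (ξ k * b k)))
          = 2 * ∑ i, ∑ k, (ξ i * b i) * (ξ k * b k) := by
            rw [Finset.mul_sum]
            exact Finset.sum_congr rfl fun i _ => by rw [Finset.mul_sum]
        _ = 2 * (C * C) := by rw [← Finset.sum_mul_sum, ← hCdef]
        _ = 2 * C ^ 2 := by ring
    rw [t1, t2, t3]; ring
  -- entry formula for h * Pperp ξ
  have hP : ∀ i j, (h * Pperp ξ) i j = h i j - S⁻¹ * (b i * ξ j) := by
    intro i j
    rw [Matrix.mul_apply]
    simp only [Pperp, Matrix.sub_apply, Matrix.one_apply, Matrix.smul_apply,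
      Matrix.vecMulVec_apply, smul_eq_mul, ← hSdef]
    rw [Finset.sum_congr rfl (fun k _ => mul_sub (h i k) _ _), Finset.sum_sub_distrib]
    congr 1
    · simp
    · rw [← hbrow i, Finset.sum_mul, Finset.mul_sum]
      exact Finset.sum_congr rfl fun k _ => by ring
  -- key3
  have key3 : Matrix.trace ((h * Pperp ξ) * (h * Pperp ξ))
      = A - 2 * (S⁻¹ * B) + S⁻¹ * S⁻¹ * C ^ 2 := by
    rw [Matrix.trace]
    simp only [Matrix.diag_apply, Matrix.mul_apply, hP]
    have e3 : ∀ i j : Fin n,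
        (h i j - S⁻¹ * (b i * ξ j)) * (h j i - S⁻¹ * (b j * ξ i))
        = h i j ^ 2 - S⁻¹ * ((ξ i * h i j) * b j) - S⁻¹ * (b i * (h i j * ξ j))
          + S⁻¹ * S⁻¹ * ((ξ i * b i) * (ξ j * b j)) := by
      intro i j
      rw [hsym' j i]; ring
    simp_rw [e3]
    simp only [Finset.sum_sub_distrib, Finset.sum_add_distrib]
    have t1 : (∑ i, ∑ j, h i j ^ 2) = A := rfl
    have t2 : (∑ i, ∑ j, S⁻¹ * ((ξ i * h i j) * b j)) = S⁻¹ * B := by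
      calc (∑ i, ∑ j, S⁻¹ * ((ξ i * h i j) * b j))
          = S⁻¹ * ∑ i, ∑ j, (ξ i * h i j) * b j := by
            rw [Finset.mul_sum]
            exact Finset.sum_congr rfl fun i _ => by rw [Finset.mul_sum]
        _ = S⁻¹ * ∑ j, ∑ i, (ξ i * h i j) * b j := by rw [Finset.sum_comm]
        _ = S⁻¹ * ∑ j, b j * b j := by
            congr 1
            exact Finset.sum_congr rfl fun j _ => by rw [← Finset.sum_mul, hbcol j]
        _ = S⁻¹ * B := by rw [hBB]
    have t3 : (∑ i, ∑ j, S⁻¹ * (b i * (h i j * ξ j))) = S⁻¹ * B := by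
      calc (∑ i, ∑ j, S⁻¹ * (b i * (h i j * ξ j)))
          = S⁻¹ * ∑ i, ∑ j, b i * (h i j * ξ j) := by
            rw [Finset.mul_sum]
            exact Finset.sum_congr rfl fun i _ => by rw [Finset.mul_sum]
        _ = S⁻¹ * ∑ i, b i * b i := by
            congr 1
            exact Finset.sum_congr rfl fun i _ => by rw [← Finset.mul_sum, hbrow i]
        _ = S⁻¹ * B := by rw [hBB]
    have t4 : (∑ i, ∑ j, S⁻¹ * S⁻¹ * ((ξ i * b i) * (ξ j * b j)))
        = S⁻¹ * S⁻¹ * C ^ 2 := by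
      calc (∑ i, ∑ j, S⁻¹ * S⁻¹ * ((ξ i * b i) * (ξ j * b j)))
          = S⁻¹ * S⁻¹ * ∑ i, ∑ j, (ξ i * b i) * (ξ j * b j) := by
            rw [Finset.mul_sum]
            exact Finset.sum_congr rfl fun i _ => by rw [Finset.mul_sum]
        _ = S⁻¹ * S⁻¹ * (C * C) := by rw [← Finset.sum_mul_sum, ← hCdef]
        _ = S⁻¹ * S⁻¹ * C ^ 2 := by ring
    rw [t1, t2, t3, t4]; ring
  rw [key1, key2, key3]
  field_simp
  ring
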